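/- Let G be a monotone finite DAG (for every edge (x,y), I(x) < I(y)) with n = |V|, sinks S, and Z = sum over r in S of (I(r)/n)^2. For a vertex v, let G_v be G with all out-edges of v removed and Z_v = Z(G_v) the corresponding quantity for G_v. Then Z - 2 I(v)/n <= Z_v <= Z. -/

import Mathlib

open Finset
open scoped Classical

noncomputable section

variable {V : Type*} [Fintype V] [DecidableEq V]

/-- The out-degree of `x` in the digraph with edge relation `E`. -/
def outdeg (E : V → V → Prop) [DecidableRel E] (x : V) : ℕ :=
  (Finset.univ.filter fun y => E x y).card

/-- The weight of a path `l = [v₀, v₁, …, vₘ]`: the product over the edges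
`(vᵢ, vᵢ₊₁)` of `1 / outdeg vᵢ`. -/
def pathWeight (E : V → V → Prop) [DecidableRel E] (l : List V) : ℝ :=
  ((l.zip l.tail).map fun p => 1 / (outdeg E p.1 : ℝ)).prod

/-- `l` is a simple directed path from `y` to `x`. -/
def IsPathList (E : V → V → Prop) (y x : V) (l : List V) : Prop :=
  l ≠ [] ∧ l.Chain' E ∧ l.head? = some y ∧ l.getLast? = some x ∧ l.Nodup

/-- The (finite) set of all simple directed paths from `y` to `x`. -/
def pathFinset (E : V → V → Prop) (y x : V) : Finset (List V) :=
  ((Finset.univ : Finset {l : List V // l.Nodup}).map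
      ⟨Subtype.val, Subtype.val_injective⟩).filter (IsPathList E y x)

/-- `infl E x y` : the influence `I(x, y)` of `x` on `y`, i.e. the sum over all
simple paths from `y` to `x` of the product of `1/outdeg` along the path.
(When `x = y` the only simple path is `[x]`, of weight `1`.) -/
def infl (E : V → V → Prop) [DecidableRel E] (x y : V) : ℝ :=
  ∑ l ∈ pathFinset E y x, pathWeight E l

/-- `totInfl E x = I(x) = ∑_y I(x, y)` : the total influence of `x`. -/
def totInfl (E : V → V → Prop) [DecidableRel E] (x : V) : ℝ :=
  ∑ y, infl E x y

/-- The digraph is acyclic. -/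
def Acyclic (E : V → V → Prop) : Prop := ∀ x, ¬ Relation.TransGen E x x

/-- The set of sinks (vertices with no out-edges). -/
def sinks (E : V → V → Prop) [DecidableRel E] : Finset V :=
  Finset.univ.filter fun r => outdeg E r = 0

end

noncomputable section
variable {V : Type*} [Fintype V] [DecidableEq V]

/-- The digraph is monotone: along every edge, influence strictly increases. -/
def MonotoneDigraph (E : V → V → Prop) [DecidableRel E] : Prop :=
  ∀ x y, E x y → totInfl E x < totInfl E y

/-- The graph obtained from `E` by removing all out-edges of `v`. -/
def remOut (E : V → V → Prop) (v : V) : V → V → Prop := fun a b => E a b ∧ a ≠ v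

instance (E : V → V → Prop) [DecidableRel E] (v : V) : DecidableRel (remOut E v) :=
  fun _ _ => instDecidableAnd

/-- `Z = ∑_{r sink} (I(r)/n)²`. -/
def Zval (E : V → V → Prop) [DecidableRel E] : ℝ :=
  ∑ r ∈ sinks E, (totInfl E r / (Fintype.card V : ℝ)) ^ 2

/-- `Z(v) = (I(v)/n)² − ∑_{u ∈ N(v)} I(v,u) (I(u)/n)²`, where `N(v)` is the set
of in-neighbours of `v`. -/
def Zfun (E : V → V → Prop) [DecidableRel E] (v : V) : ℝ :=
  (totInfl E v / (Fintype.card V : ℝ)) ^ 2 -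
    ∑ u ∈ Finset.univ.filter (fun u => E u v),
      infl E v u * (totInfl E u / (Fintype.card V : ℝ)) ^ 2

end
set_option linter.unusedSectionVars false
set_option maxHeartbeats 1000000

section Helpers
variable {V : Type*} [Fintype V] [DecidableEq V]
open Finset
open scoped Classical

theorem mem_pathFinset {E : V → V → Prop} {y x : V} {l : List V} :
    l ∈ pathFinset E y x ↔ IsPathList E y x l := by
  unfold pathFinset
  simp only [Finset.mem_filter, Finset.mem_map, Finset.mem_univ, true_and,
    Function.Embedding.coeFn_mk]
  constructor
  · rintro ⟨-, h⟩; exact h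
  · intro h; exact ⟨⟨⟨l, h.2.2.2.2⟩, rfl⟩, h⟩

theorem pathWeight_nil (E : V → V → Prop) [DecidableRel E] : pathWeight E ([] : List V) = 1 := rfl

theorem pathWeight_singleton (E : V → V → Prop) [DecidableRel E] (a : V) :
    pathWeight E [a] = 1 := rfl

theorem pathWeight_cons_cons (E : V → V → Prop) [DecidableRel E] (a b : V) (t : List V) :
    pathWeight E (a :: b :: t) = 1 / (outdeg E a : ℝ) * pathWeight E (b :: t) := by
  simp [pathWeight]

theorem pathWeight_nonneg (E : V → V → Prop) [DecidableRel E] (l : List V) :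
    0 ≤ pathWeight E l := by
  unfold pathWeight
  apply List.prod_nonneg
  intro x hx
  simp only [List.mem_map] at hx
  obtain ⟨p, -, rfl⟩ := hx
  positivity

theorem infl_nonneg (E : V → V → Prop) [DecidableRel E] (x y : V) : 0 ≤ infl E x y :=
  Finset.sum_nonneg fun l _ => pathWeight_nonneg E l

theorem totInfl_nonneg (E : V → V → Prop) [DecidableRel E] (x : V) : 0 ≤ totInfl E x :=
  Finset.sum_nonneg fun y _ => infl_nonneg E x y

theorem pathFinset_self (E : V → V → Prop) (x : V) : pathFinset E x x = {[x]} := by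
  ext l
  rw [mem_pathFinset, Finset.mem_singleton]
  constructor
  · rintro ⟨hne, hch, hh, hl, hnd⟩
    match l, hne with
    | a :: t, _ =>
      simp only [List.head?_cons, Option.some.injEq] at hh
      subst hh
      match t with
      | [] => rfl
      | b :: t' =>
        exfalso
        rw [List.getLast?_cons_cons] at hl
        have hmem : a ∈ b :: t' := List.mem_of_mem_getLast? hl
        simp only [List.nodup_cons] at hnd
        exact hnd.1 hmem
  · rintro rfl
    exact ⟨by simp, List.isChain_singleton x, by simp, by simp, by simp⟩

theorem infl_self (E : V → V → Prop) [DecidableRel E] (x : V) : infl E x x = 1 := by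
  rw [infl, pathFinset_self, Finset.sum_singleton, pathWeight_singleton]

theorem not_edge_of_sink {E : V → V → Prop} [DecidableRel E] {y : V} (h : outdeg E y = 0)
    (z : V) : ¬ E y z := by
  intro hz
  have : z ∈ Finset.univ.filter fun w => E y w := by simp [hz]
  rw [outdeg, Finset.card_eq_zero] at h
  simp [h] at this

theorem infl_eq_zero_of_sink {E : V → V → Prop} [DecidableRel E] {y r : V}
    (h : outdeg E y = 0) (hry : r ≠ y) : infl E r y = 0 := by
  rw [infl]
  apply Finset.sum_eq_zero
  intro l hl
  exfalso
  rw [mem_pathFinset] at hl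
  obtain ⟨hne, hch, hh, hlast, -⟩ := hl
  match l, hne with
  | a :: t, _ =>
    simp only [List.head?_cons, Option.some.injEq] at hh
    subst hh
    match t with
    | [] =>
      simp only [List.getLast?_singleton, Option.some.injEq] at hlast
      exact hry hlast.symm
    | b :: t' =>
      exact not_edge_of_sink h b (List.isChain_cons_cons.mp hch).1

/-- Along a chain, every element is reachable from the head (or equals it). -/
theorem chain'_transGen_head {E : V → V → Prop} :
    ∀ {l : List V} {h a : V}, l.Chain' E → l.head? = some h → a ∈ l →
      a = h ∨ Relation.TransGen E h a := by
  intro l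
  induction l with
  | nil => intro h a _ _ ha; simp at ha
  | cons b t ih =>
    intro h a hch hh ha
    simp only [List.head?_cons, Option.some.injEq] at hh
    subst hh
    rcases List.mem_cons.mp ha with rfl | hat
    · exact Or.inl rfl
    · match t, hat with
      | c :: t', hat =>
        have hch' := List.isChain_cons_cons.mp hch
        rcases ih (h := c) hch'.2 rfl hat with rfl | htg
        · exact Or.inr (Relation.TransGen.single hch'.1)
        · exact Or.inr (Relation.TransGen.head hch'.1 htg)

/-- Along a chain, the last element is reachable from every element (or equal). -/
theorem chain'_transGen_last {E : V → V → Prop} :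
    ∀ {l : List V} {b a : V}, l.Chain' E → l.getLast? = some b → a ∈ l →
      a = b ∨ Relation.TransGen E a b := by
  intro l
  induction l with
  | nil => intro b a _ _ ha; simp at ha
  | cons c t ih =>
    intro b a hch hl ha
    match t with
    | [] =>
      simp only [List.getLast?_singleton, Option.some.injEq] at hl
      subst hl
      simp only [List.mem_singleton] at ha
      exact Or.inl ha
    | d :: t' =>
      have hch' := List.isChain_cons_cons.mp hch
      rw [List.getLast?_cons_cons] at hl
      rcases List.mem_cons.mp ha with rfl | hat
      · rcases ih (b := b) hch'.2 hl (List.mem_cons_self) with rfl | htg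
        · exact Or.inr (Relation.TransGen.single hch'.1)
        · exact Or.inr (Relation.TransGen.head hch'.1 htg)
      · exact ih hch'.2 hl hat

theorem transGen_lt {E : V → V → Prop} [DecidableRel E] (hmono : MonotoneDigraph E)
    {a b : V} (h : Relation.TransGen E a b) : totInfl E a < totInfl E b := by
  induction h with
  | single hab => exact hmono _ _ hab
  | tail _ hbc ih => exact ih.trans (hmono _ _ hbc)

theorem totInfl_lt_of_infl_ne_zero {E : V → V → Prop} [DecidableRel E]
    (hmono : MonotoneDigraph E) {r v : V} (hne : r ≠ v) (h : infl E r v ≠ 0) :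
    totInfl E v < totInfl E r := by
  have : pathFinset E v r ≠ ∅ := by
    intro hemp
    rw [infl, hemp] at h
    simp at h
  obtain ⟨l, hl⟩ := Finset.nonempty_iff_ne_empty.mpr this
  rw [mem_pathFinset] at hl
  obtain ⟨hne', hch, hh, hlast, -⟩ := hl
  have hv : v ∈ l := List.mem_of_mem_head? hh
  rcases chain'_transGen_last hch hlast hv with rfl | htg
  · exact absurd rfl hne
  · exact transGen_lt hmono htg

end Helpers
section Helpers2
variable {V : Type*} [Fintype V] [DecidableEq V]
open Finset
open scoped Classical

theorem outdeg_remOut_self (E : V → V → Prop) [DecidableRel E] (v : V) :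
    outdeg (remOut E v) v = 0 := by
  rw [outdeg, Finset.card_eq_zero]
  ext b
  simp [remOut]

theorem outdeg_remOut_ne (E : V → V → Prop) [DecidableRel E] {v a : V} (h : a ≠ v) :
    outdeg (remOut E v) a = outdeg E a := by
  unfold outdeg
  congr 1
  ext b
  simp [remOut, h]

theorem sinks_remOut (E : V → V → Prop) [DecidableRel E] (v : V) :
    sinks (remOut E v) = insert v (sinks E) := by
  ext r
  simp only [sinks, Finset.mem_filter, Finset.mem_univ, true_and, Finset.mem_insert]
  by_cases h : r = v
  · subst h; simp [outdeg_remOut_self]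
  · simp [h, outdeg_remOut_ne E h]

theorem acyclic_remOut {E : V → V → Prop} (hacyc : Acyclic E) (v : V) :
    Acyclic (remOut E v) := fun x hx =>
  hacyc x (Relation.TransGen.mono (fun _ _ h => h.1) x x hx)

theorem chain'_remOut {E : V → V → Prop} {v : V} :
    ∀ {l : List V}, l.Chain' E → v ∉ l.dropLast → l.Chain' (remOut E v) := by
  intro l
  induction l with
  | nil => intro _ _; exact List.isChain_nil
  | cons a t ih =>
    intro hch hv
    match t with
    | [] => exact List.isChain_singleton _
    | b :: t' =>
      have hch' := List.isChain_cons_cons.mp hch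
      rw [List.dropLast_cons₂, List.mem_cons] at hv
      push_neg at hv
      exact List.isChain_cons_cons.mpr ⟨⟨hch'.1, fun h => hv.1 h.symm⟩, ih hch'.2 hv.2⟩

theorem pathWeight_remOut {E : V → V → Prop} [DecidableRel E] {v : V} :
    ∀ {l : List V}, v ∉ l.dropLast → pathWeight (remOut E v) l = pathWeight E l := by
  intro l
  induction l with
  | nil => intro _; rfl
  | cons a t ih =>
    intro hv
    match t with
    | [] => rfl
    | b :: t' =>
      rw [List.dropLast_cons₂, List.mem_cons] at hv
      push_neg at hv
      rw [pathWeight_cons_cons, pathWeight_cons_cons, ih hv.2,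
        outdeg_remOut_ne E (Ne.symm hv.1)]

theorem not_mem_dropLast_of_nodup_last {l : List V} {v : V} (hnd : l.Nodup)
    (hl : l.getLast? = some v) : v ∉ l.dropLast := by
  intro hv
  obtain ⟨hne, rfl⟩ := List.mem_getLast?_eq_getLast hl
  rw [← List.dropLast_append_getLast hne] at hnd
  rw [List.nodup_append] at hnd
  exact hnd.2.2 _ hv _ (List.mem_singleton_self _) rfl

theorem not_mem_of_chain'_remOut {E : V → V → Prop} {v r : V} (hrv : r ≠ v) :
    ∀ {l : List V}, l.Chain' (remOut E v) → l.getLast? = some r → v ∉ l := by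
  intro l
  induction l with
  | nil => intro _ _; simp
  | cons a t ih =>
    intro hch hl hv
    match t with
    | [] =>
      simp only [List.getLast?_singleton, Option.some.injEq] at hl
      subst hl
      simp only [List.mem_singleton] at hv
      exact hrv hv.symm
    | b :: t' =>
      have hch' := List.isChain_cons_cons.mp hch
      rw [List.getLast?_cons_cons] at hl
      rcases List.mem_cons.mp hv with rfl | hvt
      · exact hch'.1.2 rfl
      · exact ih hch'.2 hl hvt

theorem pathFinset_remOut_target (E : V → V → Prop) [DecidableRel E] (v y : V) :
    pathFinset (remOut E v) y v = pathFinset E y v := by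
  ext l
  rw [mem_pathFinset, mem_pathFinset]
  constructor
  · rintro ⟨hne, hch, hh, hl, hnd⟩
    exact ⟨hne, hch.imp fun _ _ h => h.1, hh, hl, hnd⟩
  · rintro ⟨hne, hch, hh, hl, hnd⟩
    exact ⟨hne, chain'_remOut hch (not_mem_dropLast_of_nodup_last hnd hl), hh, hl, hnd⟩

theorem infl_remOut_self (E : V → V → Prop) [DecidableRel E] (v y : V) :
    infl (remOut E v) v y = infl E v y := by
  rw [infl, infl, pathFinset_remOut_target]
  apply Finset.sum_congr rfl
  intro l hl
  rw [mem_pathFinset] at hl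
  exact pathWeight_remOut (not_mem_dropLast_of_nodup_last hl.2.2.2.2 hl.2.2.2.1)

theorem totInfl_remOut_self (E : V → V → Prop) [DecidableRel E] (v : V) :
    totInfl (remOut E v) v = totInfl E v := by
  unfold totInfl
  exact Finset.sum_congr rfl fun y _ => infl_remOut_self E v y

theorem pathFinset_remOut_ne (E : V → V → Prop) [DecidableRel E] {v r : V} (hrv : r ≠ v)
    (y : V) :
    pathFinset (remOut E v) y r = (pathFinset E y r).filter (fun l => v ∉ l) := by
  ext l
  rw [Finset.mem_filter, mem_pathFinset, mem_pathFinset]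
  constructor
  · rintro ⟨hne, hch, hh, hl, hnd⟩
    have hv : v ∉ l := not_mem_of_chain'_remOut hrv hch hl
    exact ⟨⟨hne, hch.imp fun _ _ h => h.1, hh, hl, hnd⟩, hv⟩
  · rintro ⟨⟨hne, hch, hh, hl, hnd⟩, hv⟩
    exact ⟨hne, chain'_remOut hch fun h => hv (List.dropLast_subset l h), hh, hl, hnd⟩

theorem infl_remOut_ne_eq (E : V → V → Prop) [DecidableRel E] {v r : V} (hrv : r ≠ v)
    (y : V) :
    infl (remOut E v) r y = ∑ l ∈ (pathFinset E y r).filter (fun l => v ∉ l), pathWeight E l := by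
  rw [infl, pathFinset_remOut_ne E hrv]
  apply Finset.sum_congr rfl
  intro l hl
  rw [Finset.mem_filter] at hl
  exact pathWeight_remOut fun h => hl.2 (List.dropLast_subset l h)

end Helpers2
section Helpers3
variable {V : Type*} [Fintype V] [DecidableEq V]
open Finset
open scoped Classical

theorem pathWeight_append (E : V → V → Prop) [DecidableRel E] :
    ∀ {l₁ : List V} {l₂ : List V} {a : V}, l₁.getLast? = some a → l₂.head? = some a →
      pathWeight E (l₁ ++ l₂.tail) = pathWeight E l₁ * pathWeight E l₂ := by
  intro l₁
  induction l₁ with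
  | nil => intro l₂ a h _; simp at h
  | cons b t ih =>
    intro l₂ a hlast hhead
    match t with
    | [] =>
      simp only [List.getLast?_singleton, Option.some.injEq] at hlast
      subst hlast
      match l₂, hhead with
      | c :: t₂, hhead =>
        simp only [List.head?_cons, Option.some.injEq] at hhead
        subst hhead
        simp [pathWeight_singleton]
    | c :: t' =>
      rw [List.getLast?_cons_cons] at hlast
      rw [List.cons_append, List.cons_append, pathWeight_cons_cons, ← List.cons_append,
        ih hlast hhead, pathWeight_cons_cons, mul_assoc]

private theorem takeWhile_append_of_all {p : V → Bool} :
    ∀ {xs ys : List V}, (∀ a ∈ xs, p a = true) → (xs ++ ys).takeWhile p = xs ++ ys.takeWhile p := by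
  intro xs ys
  induction xs with
  | nil => intro _; simp
  | cons a t ih =>
    intro h
    rw [List.cons_append, List.takeWhile_cons, h a (List.mem_cons_self)]
    simp only [List.cons_append, ih fun b hb => h b (List.mem_cons_of_mem a hb), if_true]

private theorem dropWhile_append_of_all {p : V → Bool} :
    ∀ {xs ys : List V}, (∀ a ∈ xs, p a = true) → (xs ++ ys).dropWhile p = ys.dropWhile p := by
  intro xs ys
  induction xs with
  | nil => intro _; simp
  | cons a t ih =>
    intro h
    rw [List.cons_append, List.dropWhile_cons, h a (List.mem_cons_self)]
    exact ih fun b hb => h b (List.mem_cons_of_mem a hb)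

private theorem dropWhile_cons_of_mem {v : V} :
    ∀ {l : List V}, v ∈ l → ∃ d', l.dropWhile (fun a => decide (a ≠ v)) = v :: d' := by
  intro l
  induction l with
  | nil => intro h; simp at h
  | cons a t ih =>
    intro hv
    by_cases hav : a = v
    · subst hav
      exact ⟨t, by simp [List.dropWhile_cons]⟩
    · rcases List.mem_cons.mp hv with rfl | hvt
      · exact absurd rfl hav
      · obtain ⟨d', hd'⟩ := ih hvt
        refine ⟨d', ?_⟩
        simpa [List.dropWhile_cons, hav] using hd'

/-- The key splitting identity: the sum of weights of paths from `y` to `r` through `v`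
equals `I(v,y) * I(r,v)`. -/
theorem sum_through_eq (E : V → V → Prop) [DecidableRel E] (hacyc : Acyclic E)
    {v r : V} (hrv : r ≠ v) (y : V) :
    ∑ l ∈ (pathFinset E y r).filter (fun l => v ∈ l), pathWeight E l
      = infl E v y * infl E r v := by
  have key : ∑ l ∈ (pathFinset E y r).filter (fun l => v ∈ l), pathWeight E l
      = ∑ p ∈ pathFinset E y v ×ˢ pathFinset E v r, pathWeight E p.1 * pathWeight E p.2 := by
    apply Finset.sum_nbij'
      (i := fun l => (l.takeWhile (fun a => decide (a ≠ v)) ++ [v],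
        l.dropWhile (fun a => decide (a ≠ v))))
      (j := fun p => p.1 ++ p.2.tail)
    case hi =>
      intro l hl
      rw [Finset.mem_filter] at hl
      obtain ⟨hlp, hvl⟩ := hl
      rw [mem_pathFinset] at hlp
      obtain ⟨hne, hch, hh, hlast, hnd⟩ := hlp
      obtain ⟨d', hd'⟩ := dropWhile_cons_of_mem hvl
      set t := l.takeWhile (fun a => decide (a ≠ v)) with ht
      have htd : t ++ (v :: d') = l := by
        rw [ht, ← hd']; exact List.takeWhile_append_dropWhile
      have htv : ∀ a ∈ t, a ≠ v := fun a ha => by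
        simpa using List.mem_takeWhile_imp ha
      rw [← htd, List.Chain', List.isChain_append] at hch
      obtain ⟨hcht, hchd, hlink⟩ := hch
      rw [← htd, List.nodup_append] at hnd
      obtain ⟨hndt, hndd, hdisj⟩ := hnd
      rw [Finset.mem_product]
      constructor
      · rw [mem_pathFinset]
        refine ⟨by simp, ?_, ?_, List.getLast?_concat, ?_⟩
        · rw [List.Chain', List.isChain_append]
          refine ⟨hcht, List.isChain_singleton v, ?_⟩
          intro x hx z hz
          simp only [List.head?_cons, Option.mem_def, Option.some.injEq] at hz
          subst hz
          exact hlink x hx v (by simp)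
        · rw [← htd, List.head?_append] at hh
          rw [List.head?_append]
          simpa using hh
        · rw [List.nodup_append]
          exact ⟨hndt, List.nodup_singleton v,
            fun a ha b hb hab => htv a ha (hab.trans (List.mem_singleton.mp hb))⟩
      · rw [hd', mem_pathFinset]
        rw [← htd, List.getLast?_append_cons] at hlast
        exact ⟨by simp, hchd, by simp, hlast, hndd⟩
    case hj =>
      intro q hq
      rw [Finset.mem_product] at hq
      obtain ⟨h1, h2⟩ := hq
      rw [mem_pathFinset] at h1 h2
      obtain ⟨hne1, hch1, hh1, hl1, hnd1⟩ := h1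
      obtain ⟨hne2, hch2, hh2, hl2, hnd2⟩ := h2
      have h₁ : q.1.dropLast ++ [v] = q.1 := List.dropLast_append_getLast? v hl1
      have h₂ : v :: q.2.tail = q.2 := List.cons_head?_tail hh2
      have hconcat : q.1 ++ q.2.tail = q.1.dropLast ++ q.2 := by
        conv_lhs => rw [← h₁]
        rw [List.append_assoc, List.singleton_append, h₂]
      have hch1' := hch1
      rw [← h₁, List.Chain', List.isChain_append] at hch1'
      obtain ⟨hcht, -, hlink1⟩ := hch1'
      have hnd1' := hnd1
      rw [← h₁, List.nodup_append] at hnd1'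
      obtain ⟨hndt, -, hdisj1⟩ := hnd1'
      rw [Finset.mem_filter]
      constructor
      · rw [mem_pathFinset]
        refine ⟨by simp [hne1], ?_, ?_, ?_, ?_⟩
        · rw [hconcat, List.Chain', List.isChain_append]
          refine ⟨hcht, hch2, ?_⟩
          intro x hx z hz
          rw [← h₂] at hz
          simp only [List.head?_cons, Option.mem_def, Option.some.injEq] at hz
          subst hz
          exact hlink1 x hx v (by simp)
        · rw [List.head?_append, hh1]
          rfl
        · rw [hconcat, ← h₂, List.getLast?_append_cons, h₂]
          exact hl2
        · rw [hconcat, List.nodup_append]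
          refine ⟨hndt, hnd2, ?_⟩
          intro a ha b hav hab
          subst hab
          have hanev : a ≠ v := fun h => hdisj1 a ha v (by simp) h
          have ha1 : a ∈ q.1 := by rw [← h₁]; exact List.mem_append_left _ ha
          have htg1 : Relation.TransGen E a v := by
            rcases chain'_transGen_last hch1 hl1 ha1 with h | h
            · exact absurd h hanev
            · exact h
          have htg2 : Relation.TransGen E v a := by
            rcases chain'_transGen_head hch2 hh2 hav with h | h
            · exact absurd h hanev
            · exact h
          exact hacyc v (htg2.trans htg1)
      · exact List.mem_append_left _ (List.mem_of_mem_getLast? hl1)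
    case left_neg =>
      intro l hl
      rw [Finset.mem_filter] at hl
      obtain ⟨d', hd'⟩ := dropWhile_cons_of_mem hl.2
      have hback : (l.takeWhile (fun a => decide (a ≠ v)) ++ [v])
          ++ (l.dropWhile (fun a => decide (a ≠ v))).tail = l := by
        rw [hd', List.tail_cons, List.append_assoc, List.singleton_append, ← hd']
        exact List.takeWhile_append_dropWhile
      exact hback
    case right_neg =>
      intro q hq
      rw [Finset.mem_product] at hq
      obtain ⟨h1, h2⟩ := hq
      rw [mem_pathFinset] at h1 h2
      obtain ⟨hne1, hch1, hh1, hl1, hnd1⟩ := h1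
      obtain ⟨hne2, hch2, hh2, hl2, hnd2⟩ := h2
      have h₁ : q.1.dropLast ++ [v] = q.1 := List.dropLast_append_getLast? v hl1
      have h₂ : v :: q.2.tail = q.2 := List.cons_head?_tail hh2
      have hvt : ∀ a ∈ q.1.dropLast, (fun a => decide (a ≠ v)) a = true := by
        intro a ha
        have hnd1' := hnd1
        rw [← h₁, List.nodup_append] at hnd1'
        simp only [decide_eq_true_eq]
        exact fun h => hnd1'.2.2 a ha v (by simp) h
      have hconcat : q.1 ++ q.2.tail = q.1.dropLast ++ q.2 := by
        conv_lhs => rw [← h₁]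
        rw [List.append_assoc, List.singleton_append, h₂]
      have e1 : (q.1 ++ q.2.tail).takeWhile (fun a => decide (a ≠ v)) = q.1.dropLast := by
        rw [hconcat, takeWhile_append_of_all hvt, ← h₂, List.takeWhile_cons]
        simp
      have e2 : (q.1 ++ q.2.tail).dropWhile (fun a => decide (a ≠ v)) = q.2 := by
        rw [hconcat, dropWhile_append_of_all hvt]
        conv_lhs => rw [← h₂, List.dropWhile_cons]
        simp [h₂]
      rw [e1, e2]
      exact Prod.ext (by simpa using h₁) rfl
    case h =>
      intro l hl
      rw [Finset.mem_filter] at hl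
      obtain ⟨d', hd'⟩ := dropWhile_cons_of_mem hl.2
      have hback : (l.takeWhile (fun a => decide (a ≠ v)) ++ [v])
          ++ (l.dropWhile (fun a => decide (a ≠ v))).tail = l := by
        rw [hd', List.tail_cons, List.append_assoc, List.singleton_append, ← hd']
        exact List.takeWhile_append_dropWhile
      conv_lhs => rw [← hback]
      exact pathWeight_append E (List.getLast?_concat) (by rw [hd']; rfl)
  rw [key, Finset.sum_product]
  rw [infl, infl, Finset.sum_mul]
  apply Finset.sum_congr rfl
  intro l₁ _
  rw [Finset.mul_sum]

end Helpers3
section Helpers4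
variable {V : Type*} [Fintype V] [DecidableEq V]
open Finset
open scoped Classical

theorem infl_decomp (E : V → V → Prop) [DecidableRel E] (hacyc : Acyclic E)
    {v r : V} (hrv : r ≠ v) (y : V) :
    infl E r y = infl (remOut E v) r y + infl E v y * infl E r v := by
  rw [infl, ← Finset.sum_filter_add_sum_filter_not (pathFinset E y r) (fun l => v ∈ l)
      (pathWeight E), sum_through_eq E hacyc hrv y, infl_remOut_ne_eq E hrv, add_comm]

theorem totInfl_remOut_ne (E : V → V → Prop) [DecidableRel E] (hacyc : Acyclic E)
    {v r : V} (hrv : r ≠ v) :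
    totInfl (remOut E v) r = totInfl E r - totInfl E v * infl E r v := by
  unfold totInfl
  rw [Finset.sum_mul, ← Finset.sum_sub_distrib]
  apply Finset.sum_congr rfl
  intro y _
  rw [infl_decomp E hacyc hrv y]
  ring

theorem infl_step (E : V → V → Prop) [DecidableRel E] (hacyc : Acyclic E)
    {y r : V} (hyr : y ≠ r) :
    infl E r y = ∑ z ∈ Finset.univ.filter (E y ·), 1 / (outdeg E y : ℝ) * infl E r z := by
  have hset : pathFinset E y r
      = (Finset.univ.filter (E y ·)).biUnion
          (fun z => (pathFinset E z r).image (List.cons y)) := by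
    ext l
    rw [Finset.mem_biUnion]
    constructor
    · intro hl
      rw [mem_pathFinset] at hl
      obtain ⟨hne, hch, hh, hlast, hnd⟩ := hl
      match l, hne with
      | a :: t, _ =>
        simp only [List.head?_cons, Option.some.injEq] at hh
        subst hh
        match t with
        | [] =>
          simp only [List.getLast?_singleton, Option.some.injEq] at hlast
          exact absurd hlast hyr
        | b :: t' =>
          have hch' := List.isChain_cons_cons.mp hch
          refine ⟨b, by simp [hch'.1], ?_⟩
          rw [Finset.mem_image]
          refine ⟨b :: t', ?_, rfl⟩
          rw [mem_pathFinset]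
          rw [List.getLast?_cons_cons] at hlast
          exact ⟨by simp, hch'.2, rfl, hlast, (List.nodup_cons.mp hnd).2⟩
    · rintro ⟨z, hz, hl⟩
      rw [Finset.mem_image] at hl
      obtain ⟨m, hm, rfl⟩ := hl
      rw [Finset.mem_filter] at hz
      rw [mem_pathFinset] at hm ⊢
      obtain ⟨hne, hch, hh, hlast, hnd⟩ := hm
      have hym : y ∉ m := by
        intro hym
        rcases chain'_transGen_head hch hh hym with rfl | htg
        · exact hacyc y (Relation.TransGen.single hz.2)
        · exact hacyc y ((Relation.TransGen.single hz.2).trans htg)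
      refine ⟨by simp, ?_, rfl, ?_, List.nodup_cons.mpr ⟨hym, hnd⟩⟩
      · rw [List.Chain', List.isChain_cons]
        refine ⟨?_, hch⟩
        intro w hw
        rw [hh] at hw
        simp only [Option.mem_def, Option.some.injEq] at hw
        subst hw
        exact hz.2
      · match m, hne with
        | c :: t, _ => rw [List.getLast?_cons_cons]; exact hlast
  rw [infl, hset, Finset.sum_biUnion]
  · apply Finset.sum_congr rfl
    intro z hz
    rw [Finset.sum_image (fun a _ b _ h => by injection h), infl, Finset.mul_sum]
    apply Finset.sum_congr rfl
    intro m hm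
    rw [mem_pathFinset] at hm
    obtain ⟨hne, -, -, -, -⟩ := hm
    match m, hne with
    | c :: t, _ => rw [pathWeight_cons_cons]
  · intro z₁ h₁ z₂ h₂ hne
    apply Finset.disjoint_left.mpr
    intro l hl₁ hl₂
    rw [Finset.mem_image] at hl₁ hl₂
    obtain ⟨m₁, hm₁, rfl⟩ := hl₁
    obtain ⟨m₂, hm₂, heq⟩ := hl₂
    rw [mem_pathFinset] at hm₁ hm₂
    apply hne
    have e1 : m₁.head? = some z₁ := hm₁.2.2.1
    have e2 : m₂.head? = some z₂ := hm₂.2.2.1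
    have : m₂ = m₁ := by injection heq
    subst this
    rw [e1] at e2
    exact Option.some_injective _ e2

theorem sum_sinks_infl (E : V → V → Prop) [DecidableRel E] (hacyc : Acyclic E) (y : V) :
    ∑ r ∈ sinks E, infl E r y = 1 := by
  have hwf : WellFounded (fun a b : V => Relation.TransGen E b a) := by
    have h1 : IsIrrefl V (fun a b => Relation.TransGen E b a) := ⟨fun a h => hacyc a h⟩
    have h2 : IsTrans V (fun a b => Relation.TransGen E b a) :=
      ⟨fun _ _ _ hab hbc => hbc.trans hab⟩
    exact Finite.wellFounded_of_trans_of_irrefl _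
  induction y using WellFounded.induction hwf with
  | _ x ih =>
    by_cases hx : outdeg E x = 0
    · have hxs : x ∈ sinks E := by simp [sinks, hx]
      rw [Finset.sum_eq_single_of_mem x hxs]
      · exact infl_self E x
      · intro r _ hrx
        exact infl_eq_zero_of_sink hx hrx
    · have hner : ∀ r ∈ sinks E, x ≠ r := by
        intro r hr heq
        subst heq
        rw [sinks, Finset.mem_filter] at hr
        exact hx hr.2
      calc ∑ r ∈ sinks E, infl E r x
          = ∑ r ∈ sinks E, ∑ z ∈ Finset.univ.filter (E x ·),
              1 / (outdeg E x : ℝ) * infl E r z :=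
            Finset.sum_congr rfl fun r hr => infl_step E hacyc (hner r hr)
        _ = ∑ z ∈ Finset.univ.filter (E x ·), 1 / (outdeg E x : ℝ)
              * ∑ r ∈ sinks E, infl E r z := by
            rw [Finset.sum_comm]
            exact Finset.sum_congr rfl fun z _ => (Finset.mul_sum _ _ _).symm
        _ = ∑ z ∈ Finset.univ.filter (E x ·), 1 / (outdeg E x : ℝ) := by
            apply Finset.sum_congr rfl
            intro z hz
            rw [Finset.mem_filter] at hz
            rw [ih z (Relation.TransGen.single hz.2), mul_one]
        _ = 1 := by
            rw [Finset.sum_const, nsmul_eq_mul]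
            have : ((Finset.univ.filter (E x ·)).card : ℝ) = (outdeg E x : ℝ) := by
              rw [outdeg]
            rw [this]
            field_simp

theorem infl_le_one (E : V → V → Prop) [DecidableRel E] (hacyc : Acyclic E)
    {r : V} (hr : r ∈ sinks E) (y : V) : infl E r y ≤ 1 := by
  rw [← sum_sinks_infl E hacyc y]
  exact Finset.single_le_sum (fun i _ => infl_nonneg E i y) hr

theorem totInfl_le_card (E : V → V → Prop) [DecidableRel E] (hacyc : Acyclic E)
    {r : V} (hr : r ∈ sinks E) : totInfl E r ≤ (Fintype.card V : ℝ) := by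
  rw [totInfl]
  calc ∑ y, infl E r y ≤ ∑ _y : V, (1 : ℝ) :=
        Finset.sum_le_sum fun y _ => infl_le_one E hacyc hr y
    _ = (Fintype.card V : ℝ) := by simp

end Helpers4

/-- For a monotone finite DAG, removing the out-edges of a vertex `v` changes
`Z` by at most `2 I(v)/n` downwards: `Z − 2I(v)/n ≤ Z_v ≤ Z`. -/
theorem Zval_remOut_bounds {V : Type*} [Fintype V] [DecidableEq V]
    (E : V → V → Prop) [DecidableRel E] (hacyc : Acyclic E)
    (hmono : MonotoneDigraph E) (v : V) :
    Zval E - 2 * totInfl E v / (Fintype.card V : ℝ) ≤ Zval (remOut E v) ∧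
      Zval (remOut E v) ≤ Zval E := by
  classical
  set n : ℝ := (Fintype.card V : ℝ) with hn_def
  have hcard : 0 < Fintype.card V := Fintype.card_pos_iff.mpr ⟨v⟩
  have hn : 0 < n := by rw [hn_def]; exact_mod_cast hcard
  set A : ℝ := totInfl E v with hA_def
  have hA : 0 ≤ A := totInfl_nonneg E v
  by_cases hv : v ∈ sinks E
  · -- v is already a sink: Z_v = Z
    have hvdeg : outdeg E v = 0 := by
      rw [sinks, Finset.mem_filter] at hv
      exact hv.2
    have hZeq : Zval (remOut E v) = Zval E := by
      rw [Zval, Zval, sinks_remOut, Finset.insert_eq_self.mpr hv]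
      apply Finset.sum_congr rfl
      intro r hr
      by_cases hrv : r = v
      · subst hrv
        rw [totInfl_remOut_self]
      · rw [totInfl_remOut_ne E hacyc hrv, infl_eq_zero_of_sink hvdeg hrv]
        ring_nf
    constructor
    · rw [hZeq]
      have : 0 ≤ 2 * A / n := by positivity
      linarith
    · rw [hZeq]
  · -- v is not a sink
    have hsum : ∑ r ∈ sinks E, infl E r v = 1 := sum_sinks_infl E hacyc v
    have hZv : Zval (remOut E v)
        = (A ^ 2 + ∑ r ∈ sinks E, (totInfl E r - A * infl E r v) ^ 2) / n ^ 2 := by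
      rw [Zval, sinks_remOut, Finset.sum_insert hv, totInfl_remOut_self, add_div, div_pow,
        Finset.sum_div]
      congr 1
      apply Finset.sum_congr rfl
      intro r hr
      have hrv : r ≠ v := fun h => hv (h ▸ hr)
      rw [totInfl_remOut_ne E hacyc hrv, div_pow]
    have hZE : Zval E = (∑ r ∈ sinks E, (totInfl E r) ^ 2) / n ^ 2 := by
      rw [Zval, Finset.sum_div]
      exact Finset.sum_congr rfl fun r _ => div_pow _ _ _
    -- facts about c r = infl E r v
    have hc0 : ∀ r ∈ sinks E, 0 ≤ infl E r v := fun r _ => infl_nonneg E r v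
    have hc1 : ∀ r ∈ sinks E, infl E r v ≤ 1 := by
      intro r hr
      exact (Finset.single_le_sum (f := fun r => infl E r v)
        (fun i _ => infl_nonneg E i v) hr).trans (le_of_eq hsum)
    have hcA : ∀ r ∈ sinks E, infl E r v * A ≤ infl E r v * totInfl E r := by
      intro r hr
      by_cases hc : infl E r v = 0
      · rw [hc]; simp
      · have hrv : r ≠ v := fun h => hv (h ▸ hr)
        have := totInfl_lt_of_infl_ne_zero hmono hrv hc
        exact mul_le_mul_of_nonneg_left this.le (hc0 r hr)
    have hIn : ∀ r ∈ sinks E, totInfl E r ≤ n := fun r hr => totInfl_le_card E hacyc hr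
    have key1 : A ^ 2 + ∑ r ∈ sinks E, (totInfl E r - A * infl E r v) ^ 2
        ≤ ∑ r ∈ sinks E, (totInfl E r) ^ 2 := by
      have per : ∀ r ∈ sinks E, (totInfl E r - A * infl E r v) ^ 2
          ≤ (totInfl E r) ^ 2 - infl E r v * A ^ 2 := by
        intro r hr
        have h1 := mul_le_mul_of_nonneg_left (hcA r hr) hA
        have h2 : 0 ≤ infl E r v * (1 - infl E r v) * A ^ 2 :=
          mul_nonneg (mul_nonneg (hc0 r hr) (by linarith [hc1 r hr])) (sq_nonneg A)
        nlinarith [h1, h2]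
      calc A ^ 2 + ∑ r ∈ sinks E, (totInfl E r - A * infl E r v) ^ 2
          ≤ A ^ 2 + ∑ r ∈ sinks E, ((totInfl E r) ^ 2 - infl E r v * A ^ 2) :=
            by linarith [Finset.sum_le_sum per]
        _ = ∑ r ∈ sinks E, (totInfl E r) ^ 2 := by
            rw [Finset.sum_sub_distrib, ← Finset.sum_mul, hsum, one_mul]
            ring
    have key2 : (∑ r ∈ sinks E, (totInfl E r) ^ 2) - 2 * A * n
        ≤ A ^ 2 + ∑ r ∈ sinks E, (totInfl E r - A * infl E r v) ^ 2 := by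
      have per : ∀ r ∈ sinks E, (totInfl E r) ^ 2 - 2 * A * n * infl E r v
          ≤ (totInfl E r - A * infl E r v) ^ 2 := by
        intro r hr
        have hcn : infl E r v * totInfl E r ≤ infl E r v * n :=
          mul_le_mul_of_nonneg_left (hIn r hr) (hc0 r hr)
        have h1 := mul_le_mul_of_nonneg_left hcn (by linarith : (0:ℝ) ≤ 2 * A)
        nlinarith [h1, sq_nonneg (A * infl E r v)]
      have hs := Finset.sum_le_sum per
      rw [Finset.sum_sub_distrib, ← Finset.mul_sum, hsum, mul_one] at hs
      nlinarith [sq_nonneg A]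
    constructor
    · rw [hZE, hZv]
      have h2An : 2 * A / n = 2 * A * n / n ^ 2 := by
        field_simp
      rw [h2An, div_sub_div_same]
      exact (div_le_div_iff_of_pos_right (by positivity)).mpr key2
    · rw [hZE, hZv]
      exact (div_le_div_iff_of_pos_right (by positivity)).mpr key1
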